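/- If the bases of a hereditary family H have a common element x and A₁ = ... = A_k = H⟨x⟩, then A₁,...,A_k are cross-intersecting with Σ|A_i| = k·|H|/2 and Π|A_i| = (|H|/2)^k; i.e., the bounds Σ|A_i| ≤ k|H|/2 and Π|A_i| ≤ (|H|/2)^k are attained. -/

import Mathlib

open Finset

theorem bounds_attained_by_star {α : Type*} [DecidableEq α]
    (H : Finset (Finset α)) (x : α) (k : ℕ)
    (hH : ∀ A ∈ H, ∀ B ⊆ A, B ∈ H)
    (hx : ∀ B ∈ H, (∀ C ∈ H, B ⊆ C → B = C) → x ∈ B) :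
    (∀ i j : Fin k, i ≠ j →
        ∀ A ∈ H.filter (fun A => x ∈ A), ∀ B ∈ H.filter (fun A => x ∈ A),
          (A ∩ B).Nonempty) ∧
    2 * ∑ _i : Fin k, (H.filter (fun A => x ∈ A)).card = k * H.card ∧
    ∏ _i : Fin k, ((H.filter (fun A => x ∈ A)).card : ℝ)
      = ((H.card : ℝ) / 2) ^ k := by
  -- every member of H extends to a member containing x
  have hins : ∀ A ∈ H, x ∉ A → insert x A ∈ H := by
    intro A hA hxA
    obtain ⟨B, hB, hmax⟩ : ∃ B ∈ H.filter (fun C => A ⊆ C), ∀ C ∈ H.filter (fun C => A ⊆ C), ¬ B < C := by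
      obtain ⟨B, hB⟩ := Finset.exists_maximal (s := H.filter (fun C => A ⊆ C))
        ⟨A, mem_filter.mpr ⟨hA, subset_refl A⟩⟩
      exact ⟨B, hB.prop, fun C hC hlt => hB.not_gt hC hlt⟩
    obtain ⟨hBH, hAB⟩ := mem_filter.mp hB
    have hxB : x ∈ B := by
      refine hx B hBH fun C hC hBC => ?_
      have hCf : C ∈ H.filter (fun C => A ⊆ C) :=
        mem_filter.mpr ⟨hC, hAB.trans hBC⟩
      by_contra hne
      exact hmax C hCf (lt_of_le_of_ne hBC hne)
    exact hH B hBH _ (insert_subset hxB hAB)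
  have key : (H.filter (fun A => x ∈ A)).card = (H.filter (fun A => x ∉ A)).card := by
    apply Finset.card_bij (fun A _ => A.erase x)
    · intro A hA
      obtain ⟨hAH, hxA⟩ := mem_filter.mp hA
      exact mem_filter.mpr ⟨hH A hAH _ (erase_subset x A), notMem_erase x A⟩
    · intro A hA B hB h
      obtain ⟨_, hxA⟩ := mem_filter.mp hA
      obtain ⟨_, hxB⟩ := mem_filter.mp hB
      rw [← insert_erase hxA, ← insert_erase hxB, h]
    · intro B hB
      obtain ⟨hBH, hxB⟩ := mem_filter.mp hB
      refine ⟨insert x B, mem_filter.mpr ⟨hins B hBH hxB, mem_insert_self x B⟩, ?_⟩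
      rw [erase_insert hxB]
  have h2 : 2 * (H.filter (fun A => x ∈ A)).card = H.card := by
    have := Finset.card_filter_add_card_filter_not (s := H)
      (p := fun A => x ∈ A)
    omega
  refine ⟨?_, ?_, ?_⟩
  · intro i j _ A hA B hB
    exact ⟨x, mem_inter.mpr ⟨(mem_filter.mp hA).2, (mem_filter.mp hB).2⟩⟩
  · simp only [Finset.sum_const, card_univ, Fintype.card_fin, smul_eq_mul]
    rw [← mul_assoc, mul_comm 2 k, mul_assoc, h2]
  · have : ((H.filter (fun A => x ∈ A)).card : ℝ) = (H.card : ℝ) / 2 := by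
      field_simp
      exact_mod_cast (by omega : (H.filter (fun A => x ∈ A)).card * 2 = H.card)
    simp [this, div_pow]
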